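/- Let t be a defined term of the lambda calculus with constructors. If the case-completion ⌈t⌉ reduces in one step by any rule other than CaseCase to a term t', then t' = ⌈t₀⌉ for some term t₀ with t → t₀. -/

import Mathlib

/- Terms of the lambda calculus with `n` constructors (de Bruijn indices).
`Ob n` plays the role of `Option (Tm n)`: a case-binding is a partial map
`Fin n → Ob n` from constructors to terms. -/
mutual
inductive Tm (n : ℕ) : Type where
  | var : ℕ → Tm n
  | app : Tm n → Tm n → Tm n
  | lam : Tm n → Tm n
  | cst : Fin n → Tm n
  | cas : (Fin n → Ob n) → Tm n → Tm n
inductive Ob (n : ℕ) : Type where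
  | none : Ob n
  | some : Tm n → Ob n
end

namespace LC

variable {n : ℕ}

/- Shift free de Bruijn indices `≥ k` by `d`. -/
mutual
def lift (d k : ℕ) : Tm n → Tm n
  | .var i => .var (if i < k then i else i + d)
  | .app t u => .app (lift d k t) (lift d k u)
  | .lam t => .lam (lift d (k+1) t)
  | .cst c => .cst c
  | .cas θ t => .cas (fun c => liftO d k (θ c)) (lift d k t)
def liftO (d k : ℕ) : Ob n → Ob n
  | .none => .none
  | .some t => .some (lift d k t)
end

/- Lift a case-binding (used for the CaseLam rule, where the bound variable
must not occur free in the binding). -/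
def liftB (θ : Fin n → Ob n) : Fin n → Ob n := fun c => liftO 1 0 (θ c)

/- Substitution of `u` for the variable `k` (capture-avoiding). -/
mutual
def subst (u : Tm n) (k : ℕ) : Tm n → Tm n
  | .var i => if i < k then .var i else if i = k then lift k 0 u else .var (i-1)
  | .app t v => .app (subst u k t) (subst u k v)
  | .lam t => .lam (subst u (k+1) t)
  | .cst c => .cst c
  | .cas θ t => .cas (fun c => substO u k (θ c)) (subst u k t)
def substO (u : Tm n) (k : ℕ) : Ob n → Ob n
  | .none => .none
  | .some t => .some (subst u k t)
end

/- `{θ}·(-)` applied inside an optional branch. -/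
def casO (θ : Fin n → Ob n) : Ob n → Ob n
  | .none => .none
  | .some u => .some (.cas θ u)

/- Composition of case-bindings: `(θ∘φ)(c) = {θ}·φ(c)` for `c ∈ dom φ`. -/
def compB (θ φ : Fin n → Ob n) : Fin n → Ob n := fun c => casO θ (φ c)

/- One-step reduction of the lambda calculus with constructors:
AppLam, LamApp, CaseCons, CaseApp, CaseLam, CaseCase, closed under all contexts. -/
inductive Step : Tm n → Tm n → Prop where
  | appLam (t u : Tm n) : Step (.app (.lam t) u) (subst u 0 t)
  | lamApp (t : Tm n) : Step (.lam (.app (lift 1 0 t) (.var 0))) t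
  | caseCons (θ : Fin n → Ob n) (c : Fin n) (u : Tm n) :
      θ c = .some u → Step (.cas θ (.cst c)) u
  | caseApp (θ : Fin n → Ob n) (t u : Tm n) :
      Step (.cas θ (.app t u)) (.app (.cas θ t) u)
  | caseLam (θ : Fin n → Ob n) (t : Tm n) :
      Step (.cas θ (.lam t)) (.lam (.cas (liftB θ) t))
  | caseCase (θ φ : Fin n → Ob n) (t : Tm n) :
      Step (.cas θ (.cas φ t)) (.cas (compB θ φ) t)
  | appL {t t' : Tm n} (u : Tm n) : Step t t' → Step (.app t u) (.app t' u)
  | appR (t : Tm n) {u u' : Tm n} : Step u u' → Step (.app t u) (.app t u')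
  | lamC {t t' : Tm n} : Step t t' → Step (.lam t) (.lam t')
  | casT (θ : Fin n → Ob n) {t t' : Tm n} : Step t t' → Step (.cas θ t) (.cas θ t')
  | casB (θ : Fin n → Ob n) (c : Fin n) {u u' : Tm n} (t : Tm n) :
      θ c = .some u → Step u u' →
      Step (.cas θ t) (.cas (Function.update θ c (.some u')) t)

/- One-step reduction by the CaseCase rule only (closed under all contexts). -/
inductive StepCC : Tm n → Tm n → Prop where
  | caseCase (θ φ : Fin n → Ob n) (t : Tm n) :
      StepCC (.cas θ (.cas φ t)) (.cas (compB θ φ) t)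
  | appL {t t' : Tm n} (u : Tm n) : StepCC t t' → StepCC (.app t u) (.app t' u)
  | appR (t : Tm n) {u u' : Tm n} : StepCC u u' → StepCC (.app t u) (.app t u')
  | lamC {t t' : Tm n} : StepCC t t' → StepCC (.lam t) (.lam t')
  | casT (θ : Fin n → Ob n) {t t' : Tm n} : StepCC t t' → StepCC (.cas θ t) (.cas θ t')
  | casB (θ : Fin n → Ob n) (c : Fin n) {u u' : Tm n} (t : Tm n) :
      θ c = .some u → StepCC u u' →
      StepCC (.cas θ t) (.cas (Function.update θ c (.some u')) t)

/- One-step reduction λC⁻ : every rule except CaseCase (closed under all contexts). -/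
inductive StepM : Tm n → Tm n → Prop where
  | appLam (t u : Tm n) : StepM (.app (.lam t) u) (subst u 0 t)
  | lamApp (t : Tm n) : StepM (.lam (.app (lift 1 0 t) (.var 0))) t
  | caseCons (θ : Fin n → Ob n) (c : Fin n) (u : Tm n) :
      θ c = .some u → StepM (.cas θ (.cst c)) u
  | caseApp (θ : Fin n → Ob n) (t u : Tm n) :
      StepM (.cas θ (.app t u)) (.app (.cas θ t) u)
  | caseLam (θ : Fin n → Ob n) (t : Tm n) :
      StepM (.cas θ (.lam t)) (.lam (.cas (liftB θ) t))
  | appL {t t' : Tm n} (u : Tm n) : StepM t t' → StepM (.app t u) (.app t' u)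
  | appR (t : Tm n) {u u' : Tm n} : StepM u u' → StepM (.app t u) (.app t u')
  | lamC {t t' : Tm n} : StepM t t' → StepM (.lam t) (.lam t')
  | casT (θ : Fin n → Ob n) {t t' : Tm n} : StepM t t' → StepM (.cas θ t) (.cas θ t')
  | casB (θ : Fin n → Ob n) (c : Fin n) {u u' : Tm n} (t : Tm n) :
      θ c = .some u → StepM u u' →
      StepM (.cas θ t) (.cas (Function.update θ c (.some u')) t)

/- A term is defined when none of its subterms is a match failure `{θ}·c` with
`c ∉ dom θ`. -/
inductive Defined : Tm n → Prop where
  | var (i : ℕ) : Defined (.var i)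
  | cst (c : Fin n) : Defined (.cst c)
  | app {t u : Tm n} : Defined t → Defined u → Defined (.app t u)
  | lam {t : Tm n} : Defined t → Defined (.lam t)
  | cas {θ : Fin n → Ob n} {t : Tm n} :
      (∀ c u, θ c = .some u → Defined u) → Defined t →
      (∀ c, t = .cst c → θ c ≠ .none) → Defined (.cas θ t)

/- Hereditarily defined: every reduct (in any number of steps) is defined. -/
def HD (t : Tm n) : Prop := ∀ u, Relation.ReflTransGen Step t u → Defined u

section Completion
variable [NeZero n]

/- The canonical match failure `{}·c₁` used to fill missing branches. -/
def failTm : Tm n := .cas (fun _ => .none) (.cst 0)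

/- Case-completion: replace every case-binding by its total completion,
filling each missing branch with `{}·c₁`. -/
mutual
def cpl : Tm n → Tm n
  | .var i => .var i
  | .app t u => .app (cpl t) (cpl u)
  | .lam t => .lam (cpl t)
  | .cst c => .cst c
  | .cas θ t => .cas (fun c => .some (cplO (θ c))) (cpl t)
def cplO : Ob n → Tm n
  | .none => failTm
  | .some u => cpl u
end

end Completion

/- The structural measure μ. -/
mutual
def mes : Tm n → ℕ
  | .var _ => 1
  | .cst _ => 1
  | .lam t => mes t + 1
  | .app t u => mes t + mes u
  | .cas θ t => mes t * ((∑ c : Fin n, mesO (θ c)) + 2)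
def mesO : Ob n → ℕ
  | .none => 0
  | .some t => mes t
end

end LC


namespace LC

private theorem tm_ind {n : ℕ} {motive : Tm n → Prop} {motiveO : Ob n → Prop}
    (hvar : ∀ i, motive (.var i))
    (happ : ∀ t u, motive t → motive u → motive (.app t u))
    (hlam : ∀ t, motive t → motive (.lam t))
    (hcst : ∀ c, motive (.cst c))
    (hcas : ∀ θ t, (∀ c, motiveO (θ c)) → motive t → motive (.cas θ t))
    (hnone : motiveO .none)
    (hsome : ∀ t, motive t → motiveO (.some t)) :
    ∀ t : Tm n, motive t :=
  fun t => Tm.rec hvar happ hlam hcst hcas hnone hsome t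

variable {n : ℕ}

theorem lift_fail [NeZero n] (d k : ℕ) : lift d k (failTm : Tm n) = failTm := rfl

theorem cpl_lift [NeZero n] (d : ℕ) :
    ∀ t : Tm n, ∀ k, cpl (lift d k t) = lift d k (cpl t) := by
  refine tm_ind (motiveO := fun o => ∀ k, cplO (liftO d k o) = lift d k (cplO o))
    ?_ ?_ ?_ ?_ ?_ ?_ ?_
  · intro i k; rfl
  · intro t u iht ihu k; simp [lift, cpl, iht, ihu]
  · intro t iht k; simp [lift, cpl, iht]
  · intro c k; rfl
  · intro θ t ihθ iht k
    simp only [lift, cpl]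
    refine congrArg₂ Tm.cas ?_ (iht k)
    funext c
    exact congrArg Ob.some (ihθ c k)
  · intro k; exact (lift_fail d k).symm
  · intro t iht k; exact iht k

theorem cplO_lift [NeZero n] (d k : ℕ) (o : Ob n) :
    cplO (liftO d k o) = lift d k (cplO o) := by
  cases o with
  | none => exact (lift_fail d k).symm
  | some t => exact cpl_lift d t k

theorem cpl_subst [NeZero n] (u : Tm n) :
    ∀ t : Tm n, ∀ k, cpl (subst u k t) = subst (cpl u) k (cpl t) := by
  refine tm_ind (motiveO := fun o => ∀ k, cplO (substO u k o) = subst (cpl u) k (cplO o))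
    ?_ ?_ ?_ ?_ ?_ ?_ ?_
  · intro i k
    simp only [subst, cpl]
    split_ifs <;> simp [cpl, cpl_lift]
  · intro t v iht ihv k; simp [subst, cpl, iht, ihv]
  · intro t iht k; simp [subst, cpl, iht]
  · intro c k; rfl
  · intro θ t ihθ iht k
    simp only [subst, cpl]
    refine congrArg₂ Tm.cas ?_ (iht k)
    funext c
    exact congrArg Ob.some (ihθ c k)
  · intro k; rfl
  · intro t iht k; exact iht k

theorem unlift [NeZero n] (d : ℕ) :
    ∀ a : Tm n, ∀ k s, cpl a = lift d k s → ∃ a₀, a = lift d k a₀ ∧ cpl a₀ = s := by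
  refine tm_ind
    (motiveO := fun o => ∀ k s, cplO o = lift d k s →
      ∃ o₀, o = liftO d k o₀ ∧ cplO o₀ = s) ?_ ?_ ?_ ?_ ?_ ?_ ?_
  · intro i k s h
    cases s <;> simp [cpl, lift] at h
    case var j => exact ⟨.var j, by simp [lift, h], rfl⟩
  · intro t u iht ihu k s h
    cases s <;> simp [cpl, lift] at h
    case app s1 s2 =>
      obtain ⟨a1, e1, c1⟩ := iht k s1 h.1
      obtain ⟨a2, e2, c2⟩ := ihu k s2 h.2
      exact ⟨.app a1 a2, by simp [lift, e1, e2], by simp [cpl, c1, c2]⟩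
  · intro t iht k s h
    cases s <;> simp [cpl, lift] at h
    case lam s1 =>
      obtain ⟨a1, e1, c1⟩ := iht (k+1) s1 h
      exact ⟨.lam a1, by simp [lift, e1], by simp [cpl, c1]⟩
  · intro c k s h
    cases s <;> simp [cpl, lift] at h
    case cst c' => exact ⟨.cst c, rfl, by simp [cpl, h]⟩
  · intro θ t ihθ iht k s h
    cases s
    case cas φ v =>
      simp only [cpl, lift, Tm.cas.injEq] at h
      have hc : ∀ c, Ob.some (cplO (θ c)) = liftO d k (φ c) := fun c => congrFun h.1 c
      have H : ∀ c, ∃ o₀, θ c = liftO d k o₀ ∧ Ob.some (cplO o₀) = φ c := by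
        intro c
        cases hφ : φ c with
        | none => exact absurd ((hc c).trans (by rw [hφ])) (fun h => by cases h)
        | some w =>
          have hw : cplO (θ c) = lift d k w := by
            have h' := hc c
            rw [hφ] at h'
            exact Ob.some.inj h'
          obtain ⟨o₀, eo, co⟩ := ihθ c k w hw
          exact ⟨o₀, eo, congrArg Ob.some co⟩
      choose θ₀ e1 e2 using H
      obtain ⟨v₀, ev, cv⟩ := iht k v h.2
      refine ⟨.cas θ₀ v₀, ?_, ?_⟩
      · simp only [lift]
        exact congrArg₂ Tm.cas (funext fun c => e1 c) ev
      · simp only [cpl]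
        exact congrArg₂ Tm.cas (funext fun c => e2 c) cv
    all_goals simp [cpl, lift] at h
  · intro k s h
    replace h : (failTm : Tm n) = lift d k s := h
    unfold failTm at h
    cases s
    case cas φ v =>
      simp only [lift, Tm.cas.injEq] at h
      have hφ : ∀ c, φ c = Ob.none := by
        intro c
        have := congrFun h.1 c
        cases hc : φ c with
        | none => rfl
        | some w => rw [hc] at this; exact absurd this (by simp [liftO])
      have hv : v = .cst 0 := by
        have h2 := h.2
        cases v <;> simp [lift] at h2
        case cst c' => rw [h2]
      refine ⟨.none, rfl, ?_⟩
      show Tm.cas (fun _ => Ob.none) (Tm.cst 0) = Tm.cas φ v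
      rw [hv]
      exact congrArg₂ Tm.cas (funext fun c => (hφ c).symm) rfl
    all_goals simp [lift] at h
  · intro t iht k s h
    obtain ⟨a₀, e, c⟩ := iht k s h
    exact ⟨.some a₀, by simp [liftO, e], c⟩

theorem fail_stepM [NeZero n] {u : Tm n} (h : StepM (failTm : Tm n) u) : False := by
  unfold failTm at h
  cases h with
  | caseCons θ c v hv => simp at hv
  | casT θ hs => cases hs
  | casB θ c t hv hs => simp at hv

theorem key_stepM [NeZero n] :
    ∀ (a t' : Tm n), StepM a t' → ∀ t : Tm n, Defined t → cpl t = a →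
      ∃ t₀ : Tm n, t' = cpl t₀ ∧ Step t t₀ := by
  intro a t' h
  induction h with
  | appLam s u =>
    intro t ht heq
    cases ht <;> simp [cpl] at heq
    case app t1 t2 d1 d2 =>
      obtain ⟨h1, h2⟩ := heq
      cases t1 <;> simp [cpl] at h1
      case lam t1' =>
        refine ⟨subst t2 0 t1', ?_, Step.appLam t1' t2⟩
        rw [cpl_subst, h1, h2]
  | lamApp s =>
    intro t ht heq
    cases ht <;> simp [cpl] at heq
    case lam t1 d1 =>
      cases t1 <;> simp [cpl] at heq
      case app p q =>
        obtain ⟨h1, h2⟩ := heq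
        cases q <;> simp [cpl] at h2
        case var i =>
          obtain ⟨a₀, ea, ca⟩ := unlift 1 p 0 s h1
          refine ⟨a₀, ca.symm, ?_⟩
          rw [h2, ea]
          exact Step.lamApp a₀
  | caseCons θ' c v hv =>
    intro t ht heq
    cases ht <;> simp [cpl] at heq
    case cas θ t1 hb d1 hne =>
      obtain ⟨h1, h2⟩ := heq
      cases t1 <;> simp [cpl] at h2
      case cst c2 =>
        cases hw : θ c with
        | none => exact absurd hw (hne c (by rw [h2]))
        | some w =>
          refine ⟨w, ?_, ?_⟩
          · have hvc := congrFun h1 c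
            rw [hv, hw] at hvc
            exact (Ob.some.inj hvc).symm
          · rw [h2]
            exact Step.caseCons θ c w hw
  | caseApp θ' s u =>
    intro t ht heq
    cases ht <;> simp [cpl] at heq
    case cas θ t1 hb d1 hne =>
      obtain ⟨h1, h2⟩ := heq
      cases t1 <;> simp [cpl] at h2
      case app p q =>
        refine ⟨.app (.cas θ p) q, ?_, Step.caseApp θ p q⟩
        simp [cpl, h1, h2.1, h2.2]
  | caseLam θ' s =>
    intro t ht heq
    cases ht <;> simp [cpl] at heq
    case cas θ t1 hb d1 hne =>
      obtain ⟨h1, h2⟩ := heq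
      cases t1 <;> simp [cpl] at h2
      case lam p =>
        refine ⟨.lam (.cas (liftB θ) p), ?_, Step.caseLam θ p⟩
        simp only [cpl]
        refine congrArg Tm.lam (congrArg₂ Tm.cas ?_ h2.symm)
        funext c
        rw [← h1]
        show liftO 1 0 (Ob.some (cplO (θ c))) = Ob.some (cplO (liftB θ c))
        rw [liftB]
        simp only [liftO]
        rw [cplO_lift]
  | appL u hs ih =>
    intro t ht heq
    cases ht <;> simp [cpl] at heq
    case app t1 t2 d1 d2 =>
      obtain ⟨t₀, e, st⟩ := ih t1 d1 heq.1
      exact ⟨.app t₀ t2, by simp [cpl, e, heq.2], Step.appL t2 st⟩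
  | appR s hs ih =>
    intro t ht heq
    cases ht <;> simp [cpl] at heq
    case app t1 t2 d1 d2 =>
      obtain ⟨t₀, e, st⟩ := ih t2 d2 heq.2
      exact ⟨.app t1 t₀, by simp [cpl, e, heq.1], Step.appR t1 st⟩
  | lamC hs ih =>
    intro t ht heq
    cases ht <;> simp [cpl] at heq
    case lam t1 d1 =>
      obtain ⟨t₀, e, st⟩ := ih t1 d1 heq
      exact ⟨.lam t₀, by simp [cpl, e], Step.lamC st⟩
  | casT θ' hs ih =>
    intro t ht heq
    cases ht <;> simp [cpl] at heq
    case cas θ t1 hb d1 hne =>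
      obtain ⟨t₀, e, st⟩ := ih t1 d1 heq.2
      exact ⟨.cas θ t₀, by simp [cpl, e, heq.1], Step.casT θ st⟩
  | casB θ' c t_ hv hs ih =>
    intro t ht heq
    cases ht <;> simp [cpl] at heq
    case cas θ t1 hb d1 hne =>
      obtain ⟨h1, h2⟩ := heq
      have hvc : Ob.some (cplO (θ c)) = θ' c := congrFun h1 c
      rw [hv] at hvc
      cases hw : θ c with
      | none =>
        have hfail := Ob.some.inj hvc
        rw [hw] at hfail
        rw [← hfail] at hs
        exact absurd hs fail_stepM
      | some w =>
        have hu := Ob.some.inj hvc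
        rw [hw] at hu
        obtain ⟨w₀, e, sw⟩ := ih w (hb c w hw) hu
        refine ⟨.cas (Function.update θ c (Ob.some w₀)) t1, ?_, Step.casB θ c t1 hw sw⟩
        simp only [cpl]
        refine congrArg₂ Tm.cas ?_ h2.symm
        funext c'
        by_cases hc : c' = c
        · subst hc
          simp [Function.update_self, cplO, e]
        · simp [Function.update_of_ne hc, cplO]
          exact (congrFun h1 c').symm

end LC

namespace LC

/-- Reduction of completed terms (non-CaseCase steps): if `t` is defined and
`⌈t⌉` reduces in one λC⁻ step (any rule but CaseCase) to `t'`, then `t' = ⌈t₀⌉`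
for some `t₀` with `t → t₀`. -/
theorem cpl_stepM {n : ℕ} [NeZero n] {t t' : Tm n}
    (ht : Defined t) (h : StepM (cpl t) t') :
    ∃ t₀ : Tm n, t' = cpl t₀ ∧ Step t t₀ := by
  exact key_stepM _ _ h t ht rfl

end LC
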